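/- Let (f,g) ∈ 𝒞₁(I), and suppose the range of (f,g) is contained in the zero set of a quadratic polynomial αx² + βxy + γy² + δx + εy + η with (α,β,γ) ≠ (0,0,0). Then this conic is nondegenerate: it is neither empty, nor a point, nor a line, nor a union of two lines. -/

import Mathlib

lemma line_key
    (I : Set ℝ) (hI : IsOpen I)
    (f g : ℝ → ℝ)
    (hf : ContDiffOn ℝ 1 f I) (hg : ContDiffOn ℝ 1 g I)
    (hg' : ∀ x ∈ I, deriv g x ≠ 0)
    (hmono : StrictMonoOn (fun x => deriv f x / deriv g x) I ∨
             StrictAntiOn (fun x => deriv f x / deriv g x) I)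
    (A B C a b : ℝ) (hab : a < b) (hJ : Set.Ioo a b ⊆ I)
    (hAB : (A, B) ≠ (0, 0))
    (hz : ∀ x ∈ Set.Ioo a b, A * f x + B * g x + C = 0) : False := by
  have hd : ∀ x ∈ Set.Ioo a b, A * deriv f x + B * deriv g x = 0 := by
    intro x hx
    have hfd : DifferentiableAt ℝ f x :=
      (hf.contDiffAt (hI.mem_nhds (hJ hx))).differentiableAt one_ne_zero
    have hgd : DifferentiableAt ℝ g x :=
      (hg.contDiffAt (hI.mem_nhds (hJ hx))).differentiableAt one_ne_zero
    have h1 : HasDerivAt (fun y => A * f y + B * g y + C)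
        (A * deriv f x + B * deriv g x) x :=
      ((hfd.hasDerivAt.const_mul A).add (hgd.hasDerivAt.const_mul B)).add_const C
    have h2 : (fun y => A * f y + B * g y + C) =ᶠ[nhds x] fun _ => (0:ℝ) := by
      filter_upwards [isOpen_Ioo.mem_nhds hx] with y hy using hz y hy
    have h3 : HasDerivAt (fun y => A * f y + B * g y + C) 0 x :=
      (hasDerivAt_const x (0:ℝ)).congr_of_eventuallyEq h2
    exact h1.unique h3
  have hA : A ≠ 0 := by
    intro hA0
    have hB : B ≠ 0 := by
      intro hB0; exact hAB (by simp [hA0, hB0])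
    have hx : (a + b) / 2 ∈ Set.Ioo a b := by constructor <;> linarith
    have := hd _ hx
    rw [hA0] at this
    have : B * deriv g ((a+b)/2) = 0 := by linarith
    rcases mul_eq_zero.mp this with h | h
    · exact hB h
    · exact hg' _ (hJ hx) h
  have hratio : ∀ x ∈ Set.Ioo a b, deriv f x / deriv g x = -B / A := by
    intro x hx
    have hgx := hg' _ (hJ hx)
    have h := hd x hx
    have hfx : deriv f x = -B / A * deriv g x := by field_simp; linarith
    rw [hfx, mul_div_assoc, div_self hgx, mul_one]
  set x₁ := (2*a + b)/3 with hx₁def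
  set x₂ := (a + 2*b)/3 with hx₂def
  have hx₁ : x₁ ∈ Set.Ioo a b := by constructor <;> (simp only [hx₁def]; linarith)
  have hx₂ : x₂ ∈ Set.Ioo a b := by constructor <;> (simp only [hx₂def]; linarith)
  have hlt : x₁ < x₂ := by simp only [hx₁def, hx₂def]; linarith
  have e₁ := hratio _ hx₁
  have e₂ := hratio _ hx₂
  rcases hmono with h | h
  · have := h (hJ hx₁) (hJ hx₂) hlt
    simp only at this
    rw [e₁, e₂] at this; exact lt_irrefl _ this
  · have := h (hJ hx₁) (hJ hx₂) hlt
    simp only at this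
    rw [e₁, e₂] at this; exact lt_irrefl _ this

/-- If the range of a 𝒞₁(I) pair is contained in the zero set of a genuine quadratic
polynomial, then this conic is nondegenerate: it is neither empty, nor a single point,
nor contained in the union of two straight lines (in particular not a line). -/
theorem conic_nondegenerate
    (I : Set ℝ) (hI : IsOpen I) (hIc : I.OrdConnected) (hne : I.Nonempty)
    (f g : ℝ → ℝ)
    (hf : ContDiffOn ℝ 1 f I) (hg : ContDiffOn ℝ 1 g I)
    (hg' : ∀ x ∈ I, deriv g x ≠ 0)
    (hmono : StrictMonoOn (fun x => deriv f x / deriv g x) I ∨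
             StrictAntiOn (fun x => deriv f x / deriv g x) I)
    (α β γ δ ε η : ℝ) (habc : (α, β, γ) ≠ (0, 0, 0))
    (hconic : ∀ x ∈ I,
      α * f x ^ 2 + β * f x * g x + γ * g x ^ 2 + δ * f x + ε * g x + η = 0) :
    (({p : ℝ × ℝ |
        α * p.1 ^ 2 + β * p.1 * p.2 + γ * p.2 ^ 2 + δ * p.1 + ε * p.2 + η = 0} :
        Set (ℝ × ℝ)).Nonempty) ∧
    (¬ ∃ p₀ : ℝ × ℝ,
      {p : ℝ × ℝ |
        α * p.1 ^ 2 + β * p.1 * p.2 + γ * p.2 ^ 2 + δ * p.1 + ε * p.2 + η = 0} ⊆ {p₀}) ∧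
    (¬ ∃ A B C A' B' C' : ℝ, (A, B) ≠ (0, 0) ∧ (A', B') ≠ (0, 0) ∧
      {p : ℝ × ℝ |
        α * p.1 ^ 2 + β * p.1 * p.2 + γ * p.2 ^ 2 + δ * p.1 + ε * p.2 + η = 0} ⊆
      {p : ℝ × ℝ | A * p.1 + B * p.2 + C = 0} ∪
      {p : ℝ × ℝ | A' * p.1 + B' * p.2 + C' = 0}) := by
  obtain ⟨x₀, hx₀⟩ := hne
  obtain ⟨r, hr, hball⟩ := Metric.isOpen_iff.mp hI x₀ hx₀
  have hIoo : Set.Ioo (x₀ - r) (x₀ + r) ⊆ I := by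
    rw [← Real.ball_eq_Ioo]; exact hball
  have hablt : x₀ - r < x₀ + r := by linarith
  have hmemcurve : ∀ x ∈ Set.Ioo (x₀ - r) (x₀ + r), (f x, g x) ∈
      {p : ℝ × ℝ | α * p.1 ^ 2 + β * p.1 * p.2 + γ * p.2 ^ 2 + δ * p.1 + ε * p.2 + η = 0} := by
    intro x hx
    exact hconic x (hIoo hx)
  refine ⟨⟨(f x₀, g x₀), hconic x₀ hx₀⟩, ?_, ?_⟩
  · rintro ⟨p₀, hsub⟩
    refine line_key I hI f g hf hg hg' hmono 1 0 (-p₀.1) _ _ hablt hIoo (by simp) ?_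
    intro x hx
    have : (f x, g x) = p₀ := hsub (hmemcurve x hx)
    have h1 : f x = p₀.1 := by rw [← this]
    rw [h1]; ring
  · rintro ⟨A, B, C, A', B', C', hAB, hAB', hsub⟩
    set u : ℝ → ℝ := fun x => A * f x + B * g x + C with hu
    set v : ℝ → ℝ := fun x => A' * f x + B' * g x + C' with hv
    have huv : ∀ x ∈ Set.Ioo (x₀ - r) (x₀ + r), u x = 0 ∨ v x = 0 := by
      intro x hx
      rcases hsub (hmemcurve x hx) with h | h
      · exact Or.inl h
      · exact Or.inr h
    by_cases hcase : ∀ x ∈ Set.Ioo (x₀ - r) (x₀ + r), u x = 0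
    · exact line_key I hI f g hf hg hg' hmono A B C _ _ hablt hIoo hAB hcase
    · push_neg at hcase
      obtain ⟨x₁, hx₁, hux₁⟩ := hcase
      have hfc : ContinuousAt f x₁ := hf.continuousOn.continuousAt (hI.mem_nhds (hIoo hx₁))
      have hgc : ContinuousAt g x₁ := hg.continuousOn.continuousAt (hI.mem_nhds (hIoo hx₁))
      have huc : ContinuousAt u x₁ :=
        ((hfc.const_mul A).add (hgc.const_mul B)).add continuousAt_const
      have hev : ∀ᶠ y in nhds x₁, u y ≠ 0 := huc.eventually_ne hux₁
      have hmem : {y | u y ≠ 0} ∩ Set.Ioo (x₀ - r) (x₀ + r) ∈ nhds x₁ :=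
        Filter.inter_mem hev (isOpen_Ioo.mem_nhds hx₁)
      obtain ⟨ε', hε', hball'⟩ := Metric.mem_nhds_iff.mp hmem
      refine line_key I hI f g hf hg hg' hmono A' B' C' (x₁ - ε') (x₁ + ε')
        (by linarith) ?_ hAB' ?_
      · intro y hy
        rw [← Real.ball_eq_Ioo] at hy
        exact hIoo (hball' hy).2
      · intro y hy
        rw [← Real.ball_eq_Ioo] at hy
        have h := hball' hy
        rcases huv y h.2 with h0 | h0
        · exact absurd h0 h.1
        · exact h0
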